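/- Let K be a field with a valuation v (with values in ℤ ∪ {∞}) such that v(d) = 0 for the integer d ≥ 2, and let f(y) = y^d + Σ_{i=1}^d c_i y^{d-i} with v(c_i) ≥ i for all i. Write f(z - c₁/d) = z^d + Σ_{i=1}^d g_i z^{d-i}. Then v(g_i) ≥ i for all i (and g₁ = 0). -/

import Mathlib

open Polynomial

/-- The Tschirnhaus change of variable preserves the normal form: if
`f = y^d + ∑ c_i y^{d-i}` with `v(c_i) ≥ i`, then the coefficients `g_i` of
`f(z - c₁/d) = z^d + ∑ g_i z^{d-i}` also satisfy `v(g_i) ≥ i`, and `g₁ = 0`. -/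
theorem stmt_13 (K : Type*) [Field K] (v : AddValuation K (WithTop ℤ))
    (d : ℕ) (hd : 2 ≤ d) (hvd : v ((d : K)) = 0)
    (c : ℕ → K) (hc : ∀ i, 1 ≤ i → i ≤ d → ((i : ℤ) : WithTop ℤ) ≤ v (c i))
    (f : K[X]) (hf : f = X ^ d + ∑ i ∈ Finset.Icc 1 d, C (c i) * X ^ (d - i))
    (g : ℕ → K) (hg : ∀ i, g i = (f.comp (X - C (c 1 / d))).coeff (d - i)) :
    (∀ i, 1 ≤ i → i ≤ d → ((i : ℤ) : WithTop ℤ) ≤ v (g i)) ∧ g 1 = 0 := by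
  set a : K := c 1 / d with ha_def
  have hd0 : (d : K) ≠ 0 := by
    intro h
    rw [h, v.map_zero] at hvd
    exact (by simp : (⊤ : WithTop ℤ) ≠ 0) hvd
  have hda : (d : K) * a = c 1 := by
    rw [ha_def]
    field_simp
  have hva : ((1 : ℤ) : WithTop ℤ) ≤ v a := by
    have h1 := hc 1 le_rfl (by omega)
    rw [← hda, v.map_mul, hvd, zero_add] at h1
    simpa using h1
  have hvnat : ∀ n : ℕ, (0 : WithTop ℤ) ≤ v ((n : K)) := by
    intro n
    induction n with
    | zero => simp [v.map_zero]
    | succ n ih =>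
      push_cast
      exact v.map_le_add ih (le_of_eq v.map_one.symm)
  -- coefficient of (X - C a)^n
  have hcoeff : ∀ n k : ℕ, ((X - C a) ^ n).coeff k = (-a) ^ (n - k) * (n.choose k : K) := by
    intro n k
    rw [sub_eq_add_neg, ← C_neg, coeff_X_add_C_pow]
  have hF : ∀ m : ℕ, (f.comp (X - C a)).coeff m =
      (-a) ^ (d - m) * (d.choose m : K) +
        ∑ j ∈ Finset.Icc 1 d, c j * ((-a) ^ (d - j - m) * ((d - j).choose m : K)) := by
    intro m
    rw [hf]
    simp only [add_comp, sum_comp, mul_comp, pow_comp, X_comp, C_comp, coeff_add,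
      finset_sum_coeff, coeff_C_mul, hcoeff]
  -- valuation bound for a basic term
  have hterm : ∀ k n : ℕ, ((k : ℤ) : WithTop ℤ) ≤ v ((-a) ^ k * (n : K)) := by
    intro k n
    rw [v.map_mul, v.map_pow, v.map_neg]
    have h1 : ((k : ℤ) : WithTop ℤ) = k • ((1 : ℤ) : WithTop ℤ) + 0 := by
      simp [nsmul_eq_mul]
    rw [h1]
    exact add_le_add (nsmul_le_nsmul_right hva k) (hvnat n)
  constructor
  · intro i hi1 hid
    rw [hg i, hF (d - i)]
    apply v.map_le_add
    · have : d - (d - i) = i := by omega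
      rw [this]
      exact hterm i _
    · apply v.map_le_sum
      intro j hj
      simp only [Finset.mem_Icc] at hj
      by_cases hji : j ≤ i
      · have h1 : d - j - (d - i) = i - j := by omega
        rw [h1, v.map_mul]
        have h2 : ((i : ℤ) : WithTop ℤ) = ((j : ℤ) : WithTop ℤ) + (((i - j : ℕ) : ℤ) : WithTop ℤ) := by
          have : (i : ℤ) = (j : ℤ) + ((i - j : ℕ) : ℤ) := by omega
          rw [this]; push_cast; ring
        rw [h2]
        exact add_le_add (hc j hj.1 hj.2) (hterm (i - j) _)
      · have h0 : (d - j).choose (d - i) = 0 := Nat.choose_eq_zero_of_lt (by omega)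
        rw [h0]
        simp [v.map_zero]
  · rw [hg 1, hF (d - 1)]
    have h1 : d - (d - 1) = 1 := by omega
    have h2 : d.choose (d - 1) = d := by
      rw [Nat.choose_symm (by omega : 1 ≤ d), Nat.choose_one_right]
    rw [h1, h2, pow_one]
    rw [Finset.sum_eq_single 1]
    · have : d - 1 - (d - 1) = 0 := by omega
      rw [this, pow_zero, Nat.choose_self]
      push_cast
      rw [← hda]
      ring_nf
    · intro j hj hj1
      simp only [Finset.mem_Icc] at hj
      have : (d - j).choose (d - 1) = 0 := Nat.choose_eq_zero_of_lt (by omega)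
      rw [this]
      simp
    · intro h
      exact absurd (Finset.mem_Icc.mpr ⟨le_rfl, by omega⟩) h
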